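/- Let k' be a field and consider the Rees algebra 𝓖 = ⊕_{r≥1} (t^{a_r}) W^r inside k'[[t]][W], with a_r ≥ r for all r, and set λ_𝓖 = inf_r (a_r / r). Then an element t^n W^m (m ≥ 1) is integral over 𝓖 if and only if n/m ≥ λ_𝓖. -/

import Mathlib

set_option synthInstance.maxHeartbeats 400000

open Polynomial

/-- The Rees algebra of a filtration `I` of ideals of `B`: the graded
`B`-subalgebra `⊕ₙ Iₙ Wⁿ` of the polynomial ring `B[W]`. -/
noncomputable def ReesAlg {B : Type*} [CommRing B] (I : ℕ → Ideal B) : Subalgebra B (Polynomial B) :=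
  Algebra.adjoin B {p | ∃ n : ℕ, ∃ g ∈ I n, p = C g * X ^ n}

lemma coeff_mem_ReesAlg {B : Type*} [CommRing B] (I : ℕ → Ideal B)
    (hI0 : I 0 = ⊤)
    (hmul : ∀ i j : ℕ, ∀ x ∈ I i, ∀ y ∈ I j, x * y ∈ I (i + j))
    {p : Polynomial B} (hp : p ∈ ReesAlg I) : ∀ d, p.coeff d ∈ I d := by
  induction hp using Algebra.adjoin_induction with
  | mem x hx =>
      obtain ⟨n, g, hg, rfl⟩ := hx
      intro d
      simp only [coeff_C_mul, coeff_X_pow, mul_ite, mul_one, mul_zero]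
      split_ifs with h
      · exact h ▸ hg
      · exact zero_mem _
  | algebraMap r =>
      intro d
      rw [Polynomial.algebraMap_eq, coeff_C]
      split_ifs with h
      · rw [h, hI0]; trivial
      · exact zero_mem _
  | add x y hx hy ihx ihy =>
      intro d
      rw [coeff_add]
      exact add_mem (ihx d) (ihy d)
  | mul x y hx hy ihx ihy =>
      intro d
      rw [coeff_mul]
      refine Ideal.sum_mem _ fun z hz => ?_
      have hz' : z.1 + z.2 = d := Finset.HasAntidiagonal.mem_antidiagonal.mp hz
      exact hz' ▸ hmul z.1 z.2 _ (ihx z.1) _ (ihy z.2)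

/-- For the Rees algebra `𝓖 = ⊕_{r≥1} (t^{a_r}) W^r ⊆ k'[[t]][W]` with `a_r ≥ r` and
`λ_𝓖 = inf_r a_r/r` (attained at `r₀`), the element `t^n W^m` (`m ≥ 1`) is integral
over `𝓖` if and only if `n/m ≥ λ_𝓖`. -/
theorem stmt_10 (k' : Type*) [Field k'] (a : ℕ → ℕ)
    (ha : ∀ r, 1 ≤ r → r ≤ a r)
    (hsub : ∀ k s, 1 ≤ k → 1 ≤ s → a (k + s) ≤ a k + a s)
    (I : ℕ → Ideal (PowerSeries k'))
    (hI0 : I 0 = ⊤)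
    (hIr : ∀ r, 1 ≤ r → I r = Ideal.span {(PowerSeries.X : PowerSeries k') ^ a r})
    (r0 : ℕ) (hr0 : 1 ≤ r0)
    (hmin : ∀ r, 1 ≤ r → (a r0 : ℚ) / (r0 : ℚ) ≤ (a r : ℚ) / (r : ℚ))
    (n m : ℕ) (hm : 1 ≤ m) :
    IsIntegral (ReesAlg I)
        ((C ((PowerSeries.X : PowerSeries k') ^ n) * X ^ m : Polynomial (PowerSeries k'))) ↔
      (a r0 : ℚ) / (r0 : ℚ) ≤ (n : ℚ) / (m : ℚ) := by
  set B := PowerSeries k' with hB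
  set t : B := PowerSeries.X with ht
  set S := ReesAlg I with hS
  -- the filtration is multiplicative
  have hmul : ∀ i j : ℕ, ∀ x ∈ I i, ∀ y ∈ I j, x * y ∈ I (i + j) := by
    intro i j x hx y hy
    rcases Nat.eq_zero_or_pos i with hi | hi
    · subst hi; rw [zero_add]; exact Ideal.mul_mem_left _ x hy
    rcases Nat.eq_zero_or_pos j with hj | hj
    · subst hj; rw [add_zero]; exact Ideal.mul_mem_right _ _ hx
    rw [hIr i hi, Ideal.mem_span_singleton] at hx
    rw [hIr j hj, Ideal.mem_span_singleton] at hy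
    rw [hIr (i + j) (by omega), Ideal.mem_span_singleton]
    calc (t : B) ^ a (i + j) ∣ t ^ (a i + a j) := pow_dvd_pow _ (hsub i j hi hj)
      _ = t ^ a i * t ^ a j := pow_add _ _ _
      _ ∣ x * y := mul_dvd_mul hx hy
  -- iterated subadditivity
  have hiter : ∀ M r : ℕ, 1 ≤ r → a (M * r) ≤ M * a r ∨ M = 0 := by
    intro M r hr
    induction M with
    | zero => right; rfl
    | succ M ih =>
      left
      rcases Nat.eq_zero_or_pos M with h | h
      · subst h; simp
      have h1 : a (M * r + r) ≤ a (M * r) + a r :=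
        hsub (M * r) r (Nat.mul_pos h hr) hr
      have h2 : a (M * r) ≤ M * a r := by
        rcases ih with h2 | h2
        · exact h2
        · omega
      calc a ((M + 1) * r) = a (M * r + r) := by ring_nf
        _ ≤ a (M * r) + a r := h1
        _ ≤ M * a r + a r := by omega
        _ = (M + 1) * a r := by ring
  constructor
  · rintro ⟨p, pm, hp⟩
    set k := p.natDegree with hk
    rw [eval₂_eq_sum_range] at hp
    have hco := congrArg (fun q => Polynomial.coeff q (m * k)) hp
    simp only [finset_sum_coeff, coeff_zero] at hco
    -- compute each term
    have hterm : ∀ i ∈ Finset.range (k + 1),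
        (((algebraMap S (Polynomial B)) (p.coeff i)) * (C (t ^ n) * X ^ m) ^ i).coeff (m * k)
          = ((algebraMap S (Polynomial B)) (p.coeff i)).coeff (m * (k - i)) * t ^ (n * i) := by
      intro i hi
      have hik : i ≤ k := Nat.lt_succ_iff.mp (Finset.mem_range.mp hi)
      have hx : (C (t ^ n) * X ^ m : Polynomial B) ^ i = C (t ^ (n * i)) * X ^ (m * i) := by
        rw [mul_pow, ← C_pow, ← pow_mul, ← pow_mul]
      rw [hx, ← mul_assoc, coeff_mul_X_pow', if_pos (Nat.mul_le_mul_left m hik),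
        coeff_mul_C, ← Nat.mul_sub]
    rw [Finset.sum_congr rfl hterm] at hco
    have c_mem : ∀ i : ℕ,
        ((algebraMap S (Polynomial B)) (p.coeff i)).coeff (m * (k - i)) ∈ I (m * (k - i)) :=
      fun i => coeff_mem_ReesAlg I hI0 hmul (SetLike.coe_mem (p.coeff i)) _
    have hck : ((algebraMap S (Polynomial B)) (p.coeff k)).coeff (m * (k - k)) = (1 : B) := by
      have h1 : p.coeff k = 1 := pm.coeff_natDegree
      simp [h1]
    rw [Finset.sum_range_succ, hck, one_mul] at hco
    -- key existence
    have key : ∃ s : ℕ, 1 ≤ s ∧ a (m * s) ≤ n * s := by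
      by_contra hcon
      push_neg at hcon
      have hmem' : (t : B) ^ (n * k) ∈ Ideal.span {(t : B) ^ (n * k + 1)} := by
        have heq : (t : B) ^ (n * k) = -∑ i ∈ Finset.range k,
            ((algebraMap S (Polynomial B)) (p.coeff i)).coeff (m * (k - i)) * t ^ (n * i) :=
          eq_neg_of_add_eq_zero_right hco
        rw [heq]
        refine neg_mem (Ideal.sum_mem _ fun i hi => ?_)
        have hik : i < k := Finset.mem_range.mp hi
        have hmem := c_mem i
        rw [hIr (m * (k - i)) (Nat.mul_pos hm (by omega)), Ideal.mem_span_singleton] at hmem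
        rw [Ideal.mem_span_singleton]
        have hbig : n * (k - i) + 1 ≤ a (m * (k - i)) := hcon (k - i) (by omega)
        have hdvd : (t : B) ^ (n * (k - i) + 1) ∣
            ((algebraMap S (Polynomial B)) (p.coeff i)).coeff (m * (k - i)) :=
          dvd_trans (pow_dvd_pow _ hbig) hmem
        have hsplit : (t : B) ^ (n * k + 1) = t ^ (n * (k - i) + 1) * t ^ (n * i) := by
          rw [← pow_add]
          congr 1
          have : n * i ≤ n * k := Nat.mul_le_mul_left n (le_of_lt hik)
          rw [Nat.mul_sub]; omega
        rw [hsplit]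
        exact mul_dvd_mul hdvd dvd_rfl
      rw [Ideal.mem_span_singleton, PowerSeries.X_pow_dvd_iff] at hmem'
      have := hmem' (n * k) (by omega)
      have h3 : (PowerSeries.coeff (R := k') (n * k))
          ((PowerSeries.X : PowerSeries k') ^ (n * k)) = 0 := this
      simp [PowerSeries.coeff_X_pow] at h3
    obtain ⟨s, hs1, hs⟩ := key
    have hms : 0 < m * s := Nat.mul_pos hm hs1
    have h1 := hmin (m * s) hms
    have h2 : (a (m * s) : ℚ) / ((m * s : ℕ) : ℚ) ≤ (n : ℚ) / (m : ℚ) := by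
      rw [div_le_div_iff₀ (by exact_mod_cast hms) (by exact_mod_cast hm)]
      have : ((a (m * s) : ℚ)) ≤ (n : ℚ) * (s : ℚ) := by exact_mod_cast hs
      push_cast
      nlinarith [this, (by positivity : (0:ℚ) < (m:ℚ))]
    exact h1.trans h2
  · intro h
    have hr0' : (0 : ℚ) < r0 := by exact_mod_cast hr0
    have hm' : (0 : ℚ) < m := by exact_mod_cast hm
    rw [div_le_div_iff₀ hr0' hm'] at h
    have hle : m * a r0 ≤ n * r0 := by
      have : ((m * a r0 : ℕ) : ℚ) ≤ ((n * r0 : ℕ) : ℚ) := by push_cast; nlinarith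
      exact_mod_cast this
    have hma : a (m * r0) ≤ n * r0 := by
      rcases hiter m r0 hr0 with h' | h'
      · omega
      · omega
    have hpow : (C (t ^ n) * X ^ m : Polynomial B) ^ r0 ∈ ReesAlg I := by
      have heq : (C (t ^ n) * X ^ m : Polynomial B) ^ r0
          = C (t ^ (n * r0)) * X ^ (m * r0) := by
        rw [mul_pow, ← C_pow, ← pow_mul, ← pow_mul]
      rw [heq]
      apply Algebra.subset_adjoin
      refine ⟨m * r0, t ^ (n * r0), ?_, rfl⟩
      rw [hIr (m * r0) (Nat.mul_pos hm hr0), Ideal.mem_span_singleton]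
      exact pow_dvd_pow _ hma
    have hint : IsIntegral S ((C (t ^ n) * X ^ m : Polynomial B) ^ r0) := by
      have : IsIntegral S ((algebraMap S (Polynomial B))
          (⟨_, hpow⟩ : S)) := isIntegral_algebraMap
      exact this
    exact IsIntegral.of_pow hr0 hint
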